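/- arXiv:2505.09163 — 2 statements merged into one kernel-verified Lean document; each statement's English description precedes it below -/
import Mathlib

section
/- Let D < 0 with D ≡ 0 or 1 (mod 4) and let K = ℚ(√D). For a primitive positive definite form Q = ax² + bxy + cy² of discriminant D with root ω_Q = (-b+√D)/(2a), the ℤ-module ℤω_Q + ℤ is a proper fractional ideal of the order 𝒪 = ℤ[(D+√D)/2] of discriminant D in K. -/
/-- For `D < 0`, `√D` denotes `i·√|D|`. -/
noncomputable def sqrtD (D : ℤ) : ℂ := Complex.I * Real.sqrt (-(D : ℝ))

/-- The root `ω_Q = (-b + √D)/(2a)`. -/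
noncomputable def omegaQ (D a b : ℤ) : ℂ := (-(b : ℂ) + sqrtD D) / (2 * (a : ℂ))

theorem stmt12 (D a b c : ℤ) (hD : D < 0) (hDmod : D % 4 = 0 ∨ D % 4 = 1)
    (ha : 0 < a) (hprim : Int.gcd a (Int.gcd b c) = 1)
    (hdisc : b ^ 2 - 4 * a * c = D) :
    {x : ℂ | ∀ y ∈ {z : ℂ | ∃ m n : ℤ, z = (m : ℂ) * omegaQ D a b + (n : ℂ)},
        x * y ∈ {z : ℂ | ∃ m n : ℤ, z = (m : ℂ) * omegaQ D a b + (n : ℂ)}} =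
      {z : ℂ | ∃ m n : ℤ, z = (m : ℂ) * (((D : ℂ) + sqrtD D) / 2) + (n : ℂ)} := by
  have hDR : (0:ℝ) < -(D:ℝ) := by
    have : (D:ℝ) < 0 := by exact_mod_cast hD
    linarith
  have hs2 : (sqrtD D)^2 = (D:ℂ) := by
    unfold sqrtD
    rw [mul_pow, Complex.I_sq]
    rw [← Complex.ofReal_pow, Real.sq_sqrt hDR.le]
    push_cast
    ring
  have haC : (a:ℂ) ≠ 0 := by exact_mod_cast ha.ne'
  set s : ℂ := sqrtD D with hsdef
  set ω : ℂ := omegaQ D a b with hωdef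
  have hωim : ω.im = Real.sqrt (-(D:ℝ)) / (2*(a:ℝ)) := by
    rw [hωdef]
    unfold omegaQ sqrtD
    rw [show (2*(a:ℂ)) = ((2*(a:ℝ) : ℝ) : ℂ) by push_cast; ring,
      Complex.div_ofReal_im]
    simp
  have hωimne : ω.im ≠ 0 := by
    rw [hωim]
    have h1 : 0 < Real.sqrt (-(D:ℝ)) := Real.sqrt_pos.mpr hDR
    have h2 : (0:ℝ) < 2*(a:ℝ) := by positivity
    positivity
  have hquad : (a:ℂ) * ω^2 + (b:ℂ) * ω + (c:ℂ) = 0 := by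
    rw [hωdef]; unfold omegaQ
    have hdC : ((b:ℂ)^2 - 4*a*c) = (D:ℂ) := by exact_mod_cast congrArg (Int.cast : ℤ → ℂ) hdisc
    field_simp
    linear_combination hs2 - hdC
  -- parity: 2 ∣ D + b
  have hpar : (2:ℤ) ∣ D + b := by
    rw [← hdisc]
    rcases Int.even_or_odd b with ⟨t, ht⟩ | ⟨t, ht⟩
    · exact ⟨2*t^2 - 2*a*c + t, by rw [ht]; ring⟩
    · exact ⟨2*t^2 + 3*t + 1 - 2*a*c, by rw [ht]; ring⟩
  obtain ⟨k, hk⟩ := hpar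
  have hkC : ((D:ℂ) + b) = 2*(k:ℂ) := by exact_mod_cast congrArg (Int.cast : ℤ → ℂ) hk
  have hθ : ((D:ℂ) + s)/2 = (a:ℂ)*ω + (k:ℂ) := by
    rw [hωdef]; unfold omegaQ
    rw [hsdef]
    field_simp
    linear_combination hkC
  ext x
  simp only [Set.mem_setOf_eq]
  constructor
  · intro hx
    obtain ⟨m, n, hxmn⟩ := hx 1 ⟨0, 1, by simp⟩
    rw [mul_one] at hxmn
    obtain ⟨p, q, hpq⟩ := hx ω ⟨1, 0, by simp⟩
    rw [hxmn] at hpq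
    have hTU : ((n*a - m*b - p*a : ℤ):ℂ) * ω = ((q*a + m*c : ℤ):ℂ) := by
      push_cast
      linear_combination (a:ℂ) * hpq - (m:ℂ) * hquad
    have hT : (n*a - m*b - p*a : ℤ) = 0 := by
      have him := congrArg Complex.im hTU
      simp [Complex.mul_im] at him
      rcases him with h | h
      · exact_mod_cast h
      · exact absurd h hωimne
    have hU : (q*a + m*c : ℤ) = 0 := by
      rw [hT] at hTU
      simp at hTU
      exact_mod_cast hTU.symm
    have h1 : a ∣ m*b := ⟨n - p, by linear_combination -hT⟩
    have h2 : a ∣ m*c := ⟨-q, by linear_combination hU⟩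
    have hmg : a ∣ m * (Int.gcd b c : ℤ) := by
      rw [Int.gcd_eq_gcd_ab b c]
      have := dvd_add (h1.mul_right (Int.gcdA b c)) (h2.mul_right (Int.gcdB b c))
      exact (by ring : m*(b * Int.gcdA b c + c * Int.gcdB b c) = m*b*Int.gcdA b c + m*c*Int.gcdB b c) ▸ this
    have hcop : IsCoprime (a:ℤ) ((Int.gcd b c : ℤ)) := by
      rw [Int.isCoprime_iff_gcd_eq_one]
      simpa using hprim
    obtain ⟨M, hM⟩ := hcop.dvd_of_dvd_mul_right hmg
    have hMC : (m:ℂ) = (a:ℂ) * (M:ℂ) := by exact_mod_cast congrArg (Int.cast : ℤ → ℂ) hM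
    refine ⟨M, n - M*k, ?_⟩
    rw [hθ]
    push_cast
    linear_combination hxmn + ω * hMC
  · rintro ⟨M, N, rfl⟩ y ⟨p, q, rfl⟩
    refine ⟨M*a*q + (M*k+N)*p - M*p*b, (M*k+N)*q - M*p*c, ?_⟩
    rw [hθ]
    push_cast
    linear_combination ((M:ℂ)*(p:ℂ)) * hquad
end

section
/- Let D < 0 with D ≡ 0 or 1 (mod 4), N a positive integer, and Q = ax² + bxy + cy² ∈ 𝒬(D,N) (so gcd(a,N) = 1). Then a·(ℤω_Q + ℤ) is an 𝒪-ideal whose norm a is coprime to N, where 𝒪 is the order of discriminant D in K = ℚ(√D). -/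
lemma mem_closure_pair {u v x : ℂ} :
    x ∈ AddSubgroup.closure ({u, v} : Set ℂ) ↔ ∃ m n : ℤ, (m : ℂ) * u + (n : ℂ) * v = x := by
  rw [← Submodule.span_int_eq_addSubgroupClosure, Submodule.mem_toAddSubgroup,
    Submodule.mem_span_pair]
  simp [zsmul_eq_mul]

lemma int_indep {z : ℂ} (hz : z.im ≠ 0) {m m' x y : ℤ}
    (h : (m : ℂ) * z + (x : ℂ) = (m' : ℂ) * z + (y : ℂ)) : m = m' ∧ x = y := by
  have him := congrArg Complex.im h
  simp [Complex.add_im, Complex.mul_im] at him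
  have hm : m = m' := by
    have : (m : ℝ) * z.im = (m' : ℝ) * z.im := by simpa using him
    exact_mod_cast mul_right_cancel₀ hz this
  refine ⟨hm, ?_⟩
  subst hm
  have h2 : (x : ℂ) = (y : ℂ) := by linear_combination h
  exact_mod_cast h2

theorem stmt13 (N : ℕ) (hN : 0 < N) (D a b c : ℤ) (hD : D < 0)
    (hDmod : D % 4 = 0 ∨ D % 4 = 1) (ha : 0 < a)
    (hprim : Int.gcd a (Int.gcd b c) = 1) (hdisc : b ^ 2 - 4 * a * c = D)
    (haN : Int.gcd a N = 1) :
    -- the lattice a·(ℤω_Q + ℤ) is contained in the order 𝒪 = ℤ·(D+√D)/2 + ℤ,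
    ({z : ℂ | ∃ m n : ℤ, z = (m : ℂ) * ((a : ℂ) * omegaQ D a b) + (n : ℂ) * (a : ℂ)} ⊆
        {z : ℂ | ∃ m n : ℤ, z = (m : ℂ) * (((D : ℂ) + sqrtD D) / 2) + (n : ℂ)}) ∧
      -- it is an 𝒪-ideal,
      (∀ x ∈ {z : ℂ | ∃ m n : ℤ, z = (m : ℂ) * (((D : ℂ) + sqrtD D) / 2) + (n : ℂ)},
        ∀ y ∈ {z : ℂ | ∃ m n : ℤ, z = (m : ℂ) * ((a : ℂ) * omegaQ D a b) + (n : ℂ) * (a : ℂ)},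
          x * y ∈
            {z : ℂ | ∃ m n : ℤ, z = (m : ℂ) * ((a : ℂ) * omegaQ D a b) + (n : ℂ) * (a : ℂ)}) ∧
      -- its norm, i.e. its index in 𝒪, equals a,
      ((AddSubgroup.closure {(a : ℂ) * omegaQ D a b, (a : ℂ)}).addSubgroupOf
          (AddSubgroup.closure {((D : ℂ) + sqrtD D) / 2, 1})).index = a.toNat ∧
      -- and this norm a is coprime to N.
      Int.gcd a N = 1 := by
  have haC : (a : ℂ) ≠ 0 := Int.cast_ne_zero.mpr ha.ne'
  have hDpos : (0 : ℝ) ≤ -(D : ℝ) := by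
    have : (D : ℝ) < 0 := by exact_mod_cast hD
    linarith
  have hsqpos : (0 : ℝ) < Real.sqrt (-(D : ℝ)) := by
    apply Real.sqrt_pos.mpr
    have : (D : ℝ) < 0 := by exact_mod_cast hD
    linarith
  -- s² = D
  have hs2 : sqrtD D * sqrtD D = (D : ℂ) := by
    unfold sqrtD
    have h1 : (Real.sqrt (-(D : ℝ)) : ℂ) * (Real.sqrt (-(D : ℝ)) : ℂ) = ((-(D : ℝ) : ℝ) : ℂ) := by
      rw [← Complex.ofReal_mul, Real.mul_self_sqrt hDpos]
    push_cast at h1 ⊢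
    linear_combination (-1 : ℂ) * h1 + (Real.sqrt (-(D:ℝ)) : ℂ)^2 * Complex.I_sq
  -- β = aω = (-b + s)/2
  have hβ : (a : ℂ) * omegaQ D a b = (-(b : ℂ) + sqrtD D) / 2 := by
    unfold omegaQ
    field_simp
  -- t := (D+b)/2
  obtain ⟨t, ht⟩ : ∃ t : ℤ, D + b = 2 * t := by
    have heven : Even (b ^ 2 + b) := by
      have := Int.even_mul_succ_self b
      have h : b ^ 2 + b = b * (b + 1) := by ring
      rw [h]; exact this
    obtain ⟨k, hk⟩ := heven
    exact ⟨k - 2 * a * c, by linear_combination hk - hdisc⟩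
  have htC : (D : ℂ) + (b : ℂ) = 2 * (t : ℂ) := by exact_mod_cast ht
  -- θ = (D+s)/2 = β + t
  have hθC : ((D : ℂ) + sqrtD D) / 2 = (-(b : ℂ) + sqrtD D) / 2 + (t : ℂ) := by
    linear_combination (1/2 : ℂ) * htC
  have hθw : ((D : ℂ) + sqrtD D) / 2 = (a : ℂ) * omegaQ D a b + (t : ℂ) := by
    linear_combination hθC - hβ
  have hdC : (b : ℂ) ^ 2 - 4 * (a : ℂ) * (c : ℂ) = (D : ℂ) := by exact_mod_cast hdisc
  -- β² = -bβ - ac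
  have hβ2 : ((a : ℂ) * omegaQ D a b) * ((a : ℂ) * omegaQ D a b) =
      -(b : ℂ) * ((a : ℂ) * omegaQ D a b) - (a : ℂ) * (c : ℂ) := by
    rw [hβ]
    linear_combination (1/4 : ℂ) * hs2 - (1/4 : ℂ) * hdC
  -- imaginary part of β
  have him : ((a : ℂ) * omegaQ D a b).im ≠ 0 := by
    rw [hβ]
    have : ((-(b : ℂ) + sqrtD D) / 2).im = Real.sqrt (-(D : ℝ)) / 2 := by
      unfold sqrtD
      simp [Complex.div_im, Complex.add_im]
    rw [this]
    positivity
  refine ⟨?_, ?_, ?_, haN⟩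
  · rintro z ⟨m, n, hz⟩
    refine ⟨m, n * a - m * t, ?_⟩
    rw [hz]; push_cast
    linear_combination (m : ℂ) * hβ - (m : ℂ) * hθC
  · rintro x ⟨m₁, n₁, hx⟩ y ⟨m₂, n₂, hy⟩
    refine ⟨m₁ * m₂ * (t - b) + m₁ * n₂ * a + n₁ * m₂,
      -(m₁ * m₂ * c) + m₁ * n₂ * t + n₁ * n₂, ?_⟩
    rw [hx, hy]; push_cast
    linear_combination (m₁ * m₂ : ℂ) * hβ2 +
      ((m₁ * m₂ : ℂ) * ((a : ℂ) * omegaQ D a b) + (m₁ * n₂ : ℂ) * (a : ℂ)) * hθw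
  · -- index computation
    set nn : ℕ := a.toNat with hnn
    have hnZ : (nn : ℤ) = a := Int.toNat_of_nonneg ha.le
    have hnn0 : nn ≠ 0 := by omega
    haveI : NeZero nn := ⟨hnn0⟩
    set G := AddSubgroup.closure ({((D : ℂ) + sqrtD D) / 2, 1} : Set ℂ) with hG
    set H := AddSubgroup.closure ({(a : ℂ) * omegaQ D a b, (a : ℂ)} : Set ℂ) with hH
    -- the hom ℤ×ℤ → G
    have hmemG : ∀ p : ℤ × ℤ, (p.1 : ℂ) * (((D : ℂ) + sqrtD D) / 2) + (p.2 : ℂ) ∈ G := by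
      intro p
      exact mem_closure_pair.mpr ⟨p.1, p.2, by ring⟩
    let φ : ℤ × ℤ →+ G :=
      { toFun := fun p => ⟨(p.1 : ℂ) * (((D : ℂ) + sqrtD D) / 2) + (p.2 : ℂ), hmemG p⟩
        map_zero' := by simp
        map_add' := by
          intro p q
          apply Subtype.ext
          simp only [Prod.fst_add, Prod.snd_add, AddSubgroup.coe_add]
          push_cast
          ring }
    have hφsurj : Function.Surjective φ := by
      rintro ⟨g, hg⟩
      obtain ⟨m, n, hmn⟩ := mem_closure_pair.mp hg
      exact ⟨(m, n), Subtype.ext (by simpa [φ] using hmn)⟩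
    -- the hom ℤ×ℤ → ZMod nn
    let ψ : ℤ × ℤ →+ ZMod nn :=
      { toFun := fun p => ((p.1 * t + p.2 : ℤ) : ZMod nn)
        map_zero' := by simp
        map_add' := by
          intro p q
          simp only [Prod.fst_add, Prod.snd_add]
          push_cast
          ring }
    have hψsurj : Function.Surjective ψ := by
      intro x
      obtain ⟨y, hy⟩ := ZMod.intCast_surjective x
      exact ⟨(0, y), by simp [ψ, hy]⟩
    have hcomap : (H.addSubgroupOf G).comap φ = ψ.ker := by
      ext ⟨m, k⟩
      simp only [AddSubgroup.mem_comap, AddSubgroup.mem_addSubgroupOf, AddMonoidHom.mem_ker]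
      constructor
      · intro hmem
        have hmem' : (m : ℂ) * (((D : ℂ) + sqrtD D) / 2) + (k : ℂ) ∈ H := hmem
        obtain ⟨m', k', heq⟩ := mem_closure_pair.mp hmem'
        have key : (m' : ℂ) * ((a : ℂ) * omegaQ D a b) + ((k' * a : ℤ) : ℂ) =
            (m : ℂ) * ((a : ℂ) * omegaQ D a b) + ((m * t + k : ℤ) : ℂ) := by
          push_cast
          linear_combination heq + (m : ℂ) * hθw
        obtain ⟨hm', hk'⟩ := int_indep him key
        have hdvd : (nn : ℤ) ∣ m * t + k := by rw [hnZ]; exact ⟨k', by linarith⟩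
        show ((m * t + k : ℤ) : ZMod nn) = 0
        exact (ZMod.intCast_zmod_eq_zero_iff_dvd _ _).mpr hdvd
      · intro hker
        have hdvd : (nn : ℤ) ∣ m * t + k :=
          (ZMod.intCast_zmod_eq_zero_iff_dvd _ _).mp hker
        rw [hnZ] at hdvd
        obtain ⟨j, hj⟩ := hdvd
        have hjC : (m : ℂ) * (t : ℂ) + (k : ℂ) = (a : ℂ) * (j : ℂ) := by exact_mod_cast hj
        show (m : ℂ) * (((D : ℂ) + sqrtD D) / 2) + (k : ℂ) ∈ H
        refine mem_closure_pair.mpr ⟨m, j, ?_⟩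
        linear_combination -(m : ℂ) * hθw - hjC
    calc (H.addSubgroupOf G).index
        = ((H.addSubgroupOf G).comap φ).index :=
          (AddSubgroup.index_comap_of_surjective _ hφsurj).symm
      _ = ψ.ker.index := by rw [hcomap]
      _ = nn := by
          rw [AddSubgroup.index_ker, AddMonoidHom.range_eq_top.mpr hψsurj,
            Nat.card_congr AddSubgroup.topEquiv.toEquiv, Nat.card_zmod]
end
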